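/- Let m ≥ 1 and let M be a real symmetric m×m matrix such that (1) every column sum vanishes: Σ_{i=1}^m M_{ij} = 0 for every 1 ≤ j ≤ m, and (2) M_{ij} + M_{(i+1)(j+1)} − M_{i(j+1)} − M_{(i+1)j} = 0 for all 1 ≤ i, j ≤ m−1. Then M = 0. -/

import Mathlib

open BigOperators

/-- Lemma 4.1: a real symmetric `m × m` matrix whose column sums all vanish and whose
second differences `M_{ij} + M_{(i+1)(j+1)} - M_{i(j+1)} - M_{(i+1)j}` all vanish is zero. -/
theorem traceless_matrix_zero (m : ℕ) (hm : 1 ≤ m) (M : Matrix (Fin m) (Fin m) ℝ)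
    (hsym : ∀ i j : Fin m, M i j = M j i)
    (hcol : ∀ j : Fin m, ∑ i, M i j = 0)
    (hdiff : ∀ (i j : Fin m) (hi : i.1 + 1 < m) (hj : j.1 + 1 < m),
      M i j + M ⟨i.1 + 1, hi⟩ ⟨j.1 + 1, hj⟩ - M i ⟨j.1 + 1, hj⟩ - M ⟨i.1 + 1, hi⟩ j = 0) :
    M = 0 := by
  have hz : (0 : ℕ) < m := hm
  set z : Fin m := ⟨0, hz⟩ with hzdef
  -- row differences are independent of the column
  have key : ∀ (jn : ℕ) (hj : jn < m) (i : Fin m) (hi : i.1 + 1 < m),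
      M ⟨i.1 + 1, hi⟩ ⟨jn, hj⟩ - M i ⟨jn, hj⟩ = M ⟨i.1 + 1, hi⟩ z - M i z := by
    intro jn
    induction jn with
    | zero => intro hj i hi; rfl
    | succ n ih =>
      intro hj i hi
      have hn : n < m := Nat.lt_of_succ_lt hj
      have h := hdiff i ⟨n, hn⟩ hi hj
      have := ih hn i hi
      simp only at h this ⊢
      linarith
  -- hence M i j - M z j = M i z - M z z
  have key2 : ∀ (inn : ℕ) (hi : inn < m) (j : Fin m),
      M ⟨inn, hi⟩ j - M z j = M ⟨inn, hi⟩ z - M z z := by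
    intro inn
    induction inn with
    | zero => intro hi j; rw [show (⟨0,hi⟩:Fin m) = z from rfl, sub_self, sub_self]
    | succ n ih =>
      intro hi j
      have hn : n < m := Nat.lt_of_succ_lt hi
      have h1 := key j.1 j.2 ⟨n, hn⟩ hi
      have h2 := ih hn j
      simp only [Fin.eta] at h1
      linarith
  have key3 : ∀ (i j : Fin m), M i j - M z j = M i z - M z z := by
    intro i j
    have := key2 i.1 i.2 j
    simpa using this
  -- column sums: sum over i of (M i z + M z j - M z z) = 0
  have hsum : ∀ j : Fin m, (∑ i, M i z) + (m : ℝ) * (M z j - M z z) = 0 := by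
    intro j
    have := hcol j
    calc (∑ i, M i z) + (m : ℝ) * (M z j - M z z)
        = ∑ i : Fin m, (M i z + (M z j - M z z)) := by
          rw [Finset.sum_add_distrib]
          simp [Finset.sum_const, mul_comm]
          ring
      _ = ∑ i, M i j := by
          apply Finset.sum_congr rfl
          intro i _
          have := key3 i j
          linarith
      _ = 0 := this
  have hz0 := hsum z
  have hmne : (m : ℝ) ≠ 0 := by positivity
  have hrow : ∀ j : Fin m, M z j = M z z := by
    intro j
    have h1 := hsum j
    have : (m : ℝ) * (M z j - M z z) = 0 := by linarith
    have := mul_eq_zero.mp this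
    rcases this with h | h
    · exact absurd h hmne
    · linarith
  have hcolz : ∀ i : Fin m, M i z = M z z := by
    intro i
    rw [hsym i z]; exact hrow i
  have hconst : ∀ i j : Fin m, M i j = M z z := by
    intro i j
    have := key3 i j
    rw [hrow j, hcolz i] at this
    linarith
  have hzz : M z z = 0 := by
    have := hcol z
    rw [Finset.sum_congr rfl (fun i _ => hcolz i), Finset.sum_const] at this
    simp at this
    rcases this with h | h
    · omega
    · exact h
  ext i j
  rw [hconst i j, hzz]; rfl
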